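/- Suppose an array (d_{i,j}) over a field satisfies the symplectic 2-frieze local rules with all entries nonzero, and suppose additionally that all adjacent 3×3 minors of black entries equal their central element. Then every adjacent 4×4 minor of black entries, det((d_{i+r,j+s})_{0≤r,s≤3}), equals 1. -/
import Mathlib

/-- In a symplectic 2-frieze with nonzero entries whose adjacent 3×3 minors equal
their central elements, every adjacent 4×4 minor of black entries equals 1. -/
theorem frieze_four_minor_eq_one {K : Type*} [Field K] (d e : ℤ → ℤ → K)
    (he : ∀ i j : ℤ, e i j = d i j * d (i + 1) (j + 1) - d (i + 1) j * d i (j + 1))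
    (hblack : ∀ i j : ℤ,
      (d i j) ^ 2 = e (i - 1) (j - 1) * e i j - e i (j - 1) * e (i - 1) j)
    (hdnz : ∀ i j : ℤ, d i j ≠ 0)
    (henz : ∀ i j : ℤ, e i j ≠ 0)
    (h3 : ∀ i j : ℤ,
      (Matrix.of fun r s : Fin 3 => d (i + (r : ℕ)) (j + (s : ℕ))).det = d (i + 1) (j + 1)) :
    ∀ i j : ℤ,
      (Matrix.of fun r s : Fin 4 => d (i + (r : ℕ)) (j + (s : ℕ))).det = 1 := by
  intro i j
  have h1 := h3 i j
  have h2 := h3 i (j + 1)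
  have h3' := h3 (i + 1) j
  have h4 := h3 (i + 1) (j + 1)
  have hE := he (i + 1) (j + 1)
  rw [Matrix.det_fin_three] at h1 h2 h3' h4
  rw [Matrix.det_succ_row_zero]
  have v3 : ((3 : Fin 4) : ℕ) = 3 := rfl
  simp only [Matrix.of_apply, Fin.sum_univ_four, Matrix.det_fin_three,
    Matrix.submatrix_apply, Fin.isValue] at *
  push_cast at *
  norm_num [Fin.succAbove, Fin.lt_def, v3] at *
  simp only [add_assoc] at h2 h3' h4 hE
  norm_num at h2 h3' h4 hE
  set x00 := d i j; set x01 := d i (j + 1); set x02 := d i (j + 2); set x03 := d i (j + 3)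
  set x10 := d (i + 1) j; set x11 := d (i + 1) (j + 1); set x12 := d (i + 1) (j + 2)
  set x13 := d (i + 1) (j + 3)
  set x20 := d (i + 2) j; set x21 := d (i + 2) (j + 1); set x22 := d (i + 2) (j + 2)
  set x23 := d (i + 2) (j + 3)
  set x30 := d (i + 3) j; set x31 := d (i + 3) (j + 1); set x32 := d (i + 3) (j + 2)
  set x33 := d (i + 3) (j + 3)
  have key : x11 * x22 - x21 * x12 ≠ 0 := by
    rw [← hE]; exact henz (i + 1) (j + 1)
  apply mul_left_cancel₀ key
  rw [mul_one]
  linear_combination (x11 * x22 * x33 - x11 * x23 * x32 - x12 * x21 * x33 + x12 * x23 * x31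
      + x13 * x21 * x32 - x13 * x22 * x31) * h1 + x11 * h4
    - (x10 * x21 * x32 - x10 * x22 * x31 - x11 * x20 * x32 + x11 * x22 * x30
      + x12 * x20 * x31 - x12 * x21 * x30) * h2 - x12 * h3'
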